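/- arXiv:1809.00697 — 4 statements merged into one kernel-verified Lean document; each statement's English description precedes it below -/
import Mathlib

section
/- Let X be a nonempty finite set and let C : Δ²(X) → [0,∞) be Borel measurable such that (i) C(δ_μ) = 0 for every μ ∈ Δ(X); (ii) C(λπ₁ + (1−λ)π₂) ≤ λC(π₁) + (1−λ)C(π₂) whenever π₁, π₂ ∈ Δ²(X) satisfy bar(π₁) = bar(π₂) and λ ∈ [0,1]; and (iii) C satisfies Axiom 2 (subadditivity). Then for every π ∈ Δ²(X) and every λ ∈ [0,1], writing μ₀ = bar(π), one has C(λ·π + (1−λ)·δ_{μ₀}) = λ·C(π). -/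
set_option linter.unusedSectionVars false

open MeasureTheory

namespace IC

variable {X : Type*} [Fintype X] [Nonempty X]

/-- The belief simplex Δ(X). -/
abbrev Δ (X : Type*) [Fintype X] : Set (X → ℝ) := stdSimplex ℝ X

/-- Δ²(X): Borel probability measures on Δ(X). -/
abbrev PM (X : Type*) [Fintype X] := ProbabilityMeasure (Δ X)

/-- Barycenter of π ∈ Δ²(X). -/
noncomputable def bar (π : PM X) : X → ℝ :=
  fun x => ∫ ν, (ν : X → ℝ) x ∂(π : Measure (Δ X))

lemma eval_integrable (π : PM X) (x : X) :
    Integrable (fun ν : Δ X => (ν : X → ℝ) x) (π : Measure (Δ X)) := by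
  have hc : Continuous (fun ν : Δ X => (ν : X → ℝ) x) :=
    (continuous_apply x).comp continuous_subtype_val
  refine (integrable_const (1 : ℝ)).mono' hc.aestronglyMeasurable ?_
  refine Filter.Eventually.of_forall fun ν => ?_
  rw [Real.norm_eq_abs]
  refine (abs_of_nonneg (ν.2.1 x)).trans_le ?_
  calc (ν : X → ℝ) x ≤ ∑ y, (ν : X → ℝ) y :=
        Finset.single_le_sum (fun y _ => ν.2.1 y) (Finset.mem_univ x)
    _ = 1 := ν.2.2

lemma bar_mem (π : PM X) : bar π ∈ Δ X := by
  constructor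
  · intro x; exact integral_nonneg fun ν => ν.2.1 x
  · calc ∑ x, bar π x
        = ∫ ν, ∑ x, (ν : X → ℝ) x ∂(π : Measure (Δ X)) :=
          (integral_finsetSum Finset.univ fun x _ => eval_integrable π x).symm
      _ = ∫ _ν, (1 : ℝ) ∂(π : Measure (Δ X)) :=
          integral_congr_ae (Filter.Eventually.of_forall fun ν => ν.2.2)
      _ = 1 := by simp

/-- Barycenter as a point of the simplex. -/
noncomputable def barPt (π : PM X) : Δ X := ⟨bar π, bar_mem π⟩

/-- Dirac measure as an element of Δ²(X). -/
noncomputable def diracPM (μ : Δ X) : PM X := ⟨Measure.dirac μ, inferInstance⟩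

lemma isProbabilityMeasure_bind {α β : Type*} [MeasurableSpace α] [MeasurableSpace β]
    (π : Measure α) [IsProbabilityMeasure π] (k : α → Measure β) (hk : Measurable k)
    (hkp : ∀ a, IsProbabilityMeasure (k a)) : IsProbabilityMeasure (π.bind k) := by
  constructor
  rw [Measure.bind_apply MeasurableSet.univ hk.aemeasurable]
  have h1 : ∀ a, k a Set.univ = 1 := fun a => (hkp a).measure_univ
  simp [h1]

/-- The Borel σ-algebra on probability measures (generated by evaluations, via the
canonical σ-algebra on measures). -/
instance instMeasurableSpacePM {Ω : Type*} [MeasurableSpace Ω] :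
    MeasurableSpace (ProbabilityMeasure Ω) :=
  MeasurableSpace.comap (fun μ => (μ : Measure Ω)) inferInstance

lemma measurable_pmCoe {Ω : Type*} [MeasurableSpace Ω] :
    Measurable (fun μ : ProbabilityMeasure Ω => (μ : Measure Ω)) :=
  measurable_iff_comap_le.mpr le_rfl

/-- Composition π∘k of an information structure with a (Borel measurable) kernel. -/
noncomputable def comp (π : PM X) (k : Δ X → PM X) (hk : Measurable k) : PM X :=
  ⟨(π : Measure (Δ X)).bind (fun μ => (k μ : Measure (Δ X))),
    isProbabilityMeasure_bind _ _ (measurable_pmCoe.comp hk) (fun μ => (k μ).2)⟩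

/-- ∫ π dP(π), for P a probability measure over Δ²(X). -/
noncomputable def joinPM (P : ProbabilityMeasure (PM X)) : PM X :=
  ⟨(P : Measure (PM X)).bind (fun π => (π : Measure (Δ X))),
    isProbabilityMeasure_bind _ _ measurable_pmCoe (fun π => π.2)⟩

/-- A kernel is mean preserving π-a.e. -/
def MeanPreservingAE (π : PM X) (k : Δ X → PM X) : Prop :=
  ∀ᵐ μ ∂(π : Measure (Δ X)), bar (k μ) = (μ : X → ℝ)

/-- Axiom 1: Blackwell monotonicity. -/
def Axiom1 (C : PM X → ℝ) : Prop :=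
  ∀ (π : PM X) (k : Δ X → PM X) (hk : Measurable k),
    MeanPreservingAE π k → C π ≤ C (comp π k hk)

/-- Axiom 2: subadditivity. -/
def Axiom2 (C : PM X → ℝ) : Prop :=
  ∀ (π : PM X) (k : Δ X → PM X) (hk : Measurable k),
    C (comp π k hk) ≤ C π + ∫ μ, C (k μ) ∂(π : Measure (Δ X))

/-- The class 𝒞 of direct information cost functions. -/
structure ClassC (C : PM X → ℝ) : Prop where
  nonneg : ∀ π, 0 ≤ C π
  bounded : ∃ M : ℝ, ∀ π, C π ≤ M
  measurable : Measurable C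
  dirac_zero : ∀ μ : Δ X, C (diracPM μ) = 0
  mixing : ∀ P : ProbabilityMeasure (PM X),
    (∃ μ₀ : X → ℝ, ∀ᵐ π ∂(P : Measure (PM X)), bar π = μ₀) →
    C (joinPM P) ≤ ∫ π, C π ∂(P : Measure (PM X))
  contOn : ∀ X' : Set X, ContinuousOn C {π : PM X | {x | 0 < bar π x} = X'}

/-- A replication process for π. -/
structure RepProcess (π : PM X) where
  T : ℕ
  seq : ℕ → PM X
  k : ℕ → Δ X → PM X
  r : ℕ → Δ X → PM X
  k_meas : ∀ t, Measurable (k t)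
  r_meas : ∀ t, Measurable (r t)
  init : seq 0 = diracPM (barPt π)
  final : seq (2 * T) = π
  k_mp : ∀ t, t < T → MeanPreservingAE (seq (2 * t)) (k t)
  k_comp : ∀ t, (ht : t < T) → seq (2 * t + 1) = comp (seq (2 * t)) (k t) (k_meas t)
  r_mp : ∀ t, t < T → MeanPreservingAE (seq (2 * t + 2)) (r t)
  r_comp : ∀ t, (ht : t < T) → seq (2 * t + 1) = comp (seq (2 * t + 2)) (r t) (r_meas t)

/-- Total cost of a replication process. -/
noncomputable def totalCost (C : PM X → ℝ) {π : PM X} (R : RepProcess π) : ℝ :=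
  ∑ t ∈ Finset.range R.T, ∫ μ, C (R.k t μ) ∂((R.seq (2 * t) : Measure (Δ X)))

/-- The indirect cost φ(C). -/
noncomputable def phi (C : PM X → ℝ) (π : PM X) : ℝ :=
  sInf (Set.range fun R : RepProcess π => totalCost C R)

/-- Uniformly posterior separable cost. -/
def UPS (C : PM X → ℝ) : Prop :=
  ∃ H : (X → ℝ) → ℝ, ConvexOn ℝ (Δ X) H ∧
    ∀ π : PM X, C π = (∫ ν, H (ν : X → ℝ) ∂(π : Measure (Δ X))) - H (bar π)


/-- Convex combination λ·π₁ + (1−λ)·π₂ of two information structures (setwise). -/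
noncomputable def mixPM (lam : ℝ) (h0 : 0 ≤ lam) (h1 : lam ≤ 1) (π₁ π₂ : PM X) : PM X :=
  ⟨ENNReal.ofReal lam • (π₁ : Measure (Δ X)) + ENNReal.ofReal (1 - lam) • (π₂ : Measure (Δ X)), by
    constructor
    rw [Measure.add_apply, Measure.smul_apply, Measure.smul_apply, measure_univ, measure_univ,
      smul_eq_mul, smul_eq_mul, mul_one, mul_one,
      ← ENNReal.ofReal_add h0 (by linarith : (0:ℝ) ≤ 1 - lam)]
    rw [show lam + (1 - lam) = 1 by ring, ENNReal.ofReal_one]⟩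

lemma measurable_pm_of_measurable {Ω : Type*} [MeasurableSpace Ω] {β : Type*} [MeasurableSpace β]
    {k : β → ProbabilityMeasure Ω} (h : Measurable fun b => (k b : Measure Ω)) : Measurable k := by
  intro s hs
  obtain ⟨t, ht, rfl⟩ := hs
  exact h ht

lemma bar_diracPM (μ : Δ X) : bar (diracPM μ) = (μ : X → ℝ) := by
  funext x
  have h : ((diracPM μ : PM X) : Measure (Δ X)) = Measure.dirac μ := rfl
  simp [bar, h]

/-- Lemma 1 in the paper: under Axiom 0 (Dirac costs zero, mixture
convexity at a fixed barycenter) and Axiom 2 (subadditivity), the cost of the dilution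
λ·π + (1−λ)·δ_{bar(π)} equals λ·C(π). -/
theorem dilution_cost (C : PM X → ℝ)
    (hmeas : Measurable C) (hnonneg : ∀ π : PM X, 0 ≤ C π)
    (hdirac : ∀ μ : Δ X, C (diracPM μ) = 0)
    (hconv : ∀ (π₁ π₂ : PM X) (lam : ℝ) (h0 : 0 ≤ lam) (h1 : lam ≤ 1),
      bar π₁ = bar π₂ → C (mixPM lam h0 h1 π₁ π₂) ≤ lam * C π₁ + (1 - lam) * C π₂)
    (hsub : Axiom2 C) :
    ∀ (π : PM X) (lam : ℝ) (h0 : 0 ≤ lam) (h1 : lam ≤ 1),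
      C (mixPM lam h0 h1 π (diracPM (barPt π))) = lam * C π := by
  intro π lam h0 h1
  set μ0 : Δ X := barPt π with hμ0
  have hupper : ∀ (β : ℝ) (hb0 : 0 ≤ β) (hb1 : β ≤ 1),
      C (mixPM β hb0 hb1 π (diracPM μ0)) ≤ β * C π := by
    intro β hb0 hb1
    have hb : bar π = bar (diracPM μ0) := by
      rw [bar_diracPM]; rfl
    have := hconv π (diracPM μ0) β hb0 hb1 hb
    rw [hdirac] at this
    linarith
  rcases eq_or_lt_of_le h1 with heq | hlt
  · -- lam = 1
    subst heq
    have hmix : mixPM 1 h0 h1 π (diracPM μ0) = π := by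
      apply Subtype.ext
      show ENNReal.ofReal 1 • (π : Measure (Δ X)) + ENNReal.ofReal (1 - 1) • _ = _
      simp
    rw [hmix, one_mul]
  · -- lam < 1
    set p : Measure (Δ X) := (π : Measure (Δ X)) with hp
    set d : Measure (Δ X) := Measure.dirac μ0 with hd
    set p₀ : ENNReal := p {μ0} with hp₀
    have hp₀fin : p₀ ≠ ⊤ := (measure_lt_top p _).ne
    set p0R : ℝ := p₀.toReal with hp0R
    have hp0R0 : 0 ≤ p0R := ENNReal.toReal_nonneg
    have hp₀eq : p₀ = ENNReal.ofReal p0R := (ENNReal.ofReal_toReal hp₀fin).symm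
    set cR : ℝ := (1 - lam) + lam * p0R with hcR
    have hcRpos : 0 < cR := by nlinarith [mul_nonneg h0 hp0R0]
    set α : ℝ := (1 - lam) / cR with hα
    have hα0 : 0 ≤ α := div_nonneg (by linarith) hcRpos.le
    have hα1 : α ≤ 1 := by
      rw [hα, div_le_one hcRpos]; nlinarith [mul_nonneg h0 hp0R0]
    set τ : PM X := mixPM α hα0 hα1 π (diracPM μ0) with hτ
    set l : ENNReal := ENNReal.ofReal lam with hl
    set m : ENNReal := ENNReal.ofReal (1 - lam) with hm
    have hlm : l + m = 1 := by
      rw [hl, hm, ← ENNReal.ofReal_add h0 (by linarith)]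
      norm_num
    set c : ENNReal := l * p₀ + m with hc
    have hcR' : c = ENNReal.ofReal cR := by
      rw [hc, hl, hm, hp₀eq, ← ENNReal.ofReal_mul h0,
        ← ENNReal.ofReal_add (mul_nonneg h0 hp0R0) (by linarith), hcR]
      ring_nf
    have hcα : c * ENNReal.ofReal α = m := by
      rw [hcR', ← ENNReal.ofReal_mul hcRpos.le, hα, mul_div_cancel₀ _ hcRpos.ne', hm]
    have hcβ : c * ENNReal.ofReal (1 - α) = l * p₀ := by
      rw [hcR', ← ENNReal.ofReal_mul hcRpos.le, hl, hp₀eq, ← ENNReal.ofReal_mul h0]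
      congr 1
      rw [hα, mul_sub, mul_one, mul_div_cancel₀ _ hcRpos.ne', hcR]
      ring
    set k : Δ X → PM X := fun μ => if μ = μ0 then τ else diracPM μ with hk0
    have hg : Measurable fun μ => (k μ : Measure (Δ X)) := by
      have heq : (fun μ => (k μ : Measure (Δ X)))
          = fun μ => if μ = μ0 then (τ : Measure (Δ X)) else Measure.dirac μ := by
        funext μ; by_cases h : μ = μ0 <;> simp [hk0, h, diracPM]
      rw [heq]
      exact Measurable.ite (by simpa using measurableSet_singleton μ0)
        measurable_const Measure.measurable_dirac
    have hk : Measurable k := measurable_pm_of_measurable hg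
    set σ : PM X := mixPM lam h0 h1 π (diracPM μ0) with hσ
    have hσm : (σ : Measure (Δ X)) = l • p + m • d := rfl
    have hkμ0 : (k μ0 : Measure (Δ X)) = (τ : Measure (Δ X)) := by simp [hk0]
    have hfinal : ∀ A e : ENNReal,
        l * ((ENNReal.ofReal α * (A + e * p₀) + ENNReal.ofReal (1 - α) * e) * p₀ + A)
          + m * (ENNReal.ofReal α * (A + e * p₀) + ENNReal.ofReal (1 - α) * e)
        = A + e * p₀ := by
      intro A e
      have h1 : l * ((ENNReal.ofReal α * (A + e * p₀) + ENNReal.ofReal (1 - α) * e) * p₀ + A)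
            + m * (ENNReal.ofReal α * (A + e * p₀) + ENNReal.ofReal (1 - α) * e)
          = (c * ENNReal.ofReal α) * (A + e * p₀) + (c * ENNReal.ofReal (1 - α)) * e + l * A := by
        rw [hc]; ring
      rw [h1, hcα, hcβ]
      have h2 : m * (A + e * p₀) + l * p₀ * e + l * A = (l + m) * (A + e * p₀) := by ring
      rw [h2, hlm, one_mul]
    have hcomp : comp σ k hk = π := by
      apply Subtype.ext
      show (σ : Measure (Δ X)).bind (fun μ => (k μ : Measure (Δ X))) = p
      apply Measure.ext
      intro s hs
      have hks : Measurable fun μ => (k μ : Measure (Δ X)) s :=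
        (Measure.measurable_coe hs).comp hg
      rw [Measure.bind_apply hs hg.aemeasurable, hσm, lintegral_add_measure, lintegral_smul_measure,
        lintegral_smul_measure, hd, lintegral_dirac' _ hks, hkμ0]
      set e : ENNReal := s.indicator 1 μ0 with he
      have hT : (τ : Measure (Δ X)) s = ENNReal.ofReal α * p s + ENNReal.ofReal (1 - α) * e := by
        show (ENNReal.ofReal α • p + ENNReal.ofReal (1 - α) • d) s = _
        rw [Measure.add_apply, Measure.smul_apply, Measure.smul_apply, smul_eq_mul,
          smul_eq_mul, hd, Measure.dirac_apply' _ hs]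
      have hPs : p s = p (s ∩ {μ0}ᶜ) + e * p₀ := by
        have hdiff : p (s ∩ {μ0}) + p (s \ {μ0}) = p s :=
          measure_inter_add_diff s (measurableSet_singleton μ0)
        rw [Set.diff_eq] at hdiff
        by_cases hμ : μ0 ∈ s
        · have h1 : s ∩ {μ0} = {μ0} :=
            Set.inter_eq_self_of_subset_right (Set.singleton_subset_iff.mpr hμ)
          have h2 : e = 1 := by rw [he, Set.indicator_of_mem hμ, Pi.one_apply]
          rw [h2, one_mul, hp₀]
          rw [h1] at hdiff
          rw [← hdiff]
          exact add_comm _ _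
        · have h1 : s ∩ {μ0} = ∅ := Set.inter_singleton_eq_empty.mpr hμ
          have h2 : e = 0 := by rw [he, Set.indicator_of_notMem hμ]
          rw [h2, zero_mul, add_zero]
          rw [h1, measure_empty, zero_add] at hdiff
          rw [hdiff]
      have hsplit : ∫⁻ μ, (k μ : Measure (Δ X)) s ∂p
          = (τ : Measure (Δ X)) s * p₀ + p (s ∩ {μ0}ᶜ) := by
        rw [← lintegral_add_compl (fun μ => (k μ : Measure (Δ X)) s)
          (measurableSet_singleton μ0)]
        congr 1
        · rw [lintegral_singleton, hkμ0]
        · rw [setLIntegral_congr_fun (measurableSet_singleton μ0).compl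
            ((fun μ (hμ : μ ∈ ({μ0}ᶜ : Set (Δ X))) => by
              have hne : μ ≠ μ0 := hμ
              show (k μ : Measure (Δ X)) s = s.indicator 1 μ
              have : (k μ : Measure (Δ X)) = Measure.dirac μ := by simp [hk0, hne, diracPM]
              rw [this, Measure.dirac_apply' _ hs]))]
          rw [lintegral_indicator_one hs, Measure.restrict_apply hs]
      rw [hsplit, hT, hPs]
      exact hfinal _ _
    have hint : ∫ μ, C (k μ) ∂(σ : Measure (Δ X)) = cR * C τ := by
      have hfun : (fun μ => C (k μ)) = Set.indicator {μ0} (fun _ => C τ) := by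
        funext μ; by_cases h : μ = μ0
        · simp [hk0, h]
        · simp [hk0, h, hdirac]
      rw [hfun, integral_indicator_const _ (measurableSet_singleton μ0)]
      have hσ0 : (σ : Measure (Δ X)) {μ0} = c := by
        rw [hσm, Measure.add_apply, Measure.smul_apply, Measure.smul_apply, smul_eq_mul,
          smul_eq_mul, hd, Measure.dirac_apply' _ (measurableSet_singleton μ0)]
        rw [Set.indicator_of_mem (Set.mem_singleton μ0), Pi.one_apply, mul_one, hc, hp₀]
      rw [Measure.real, hσ0, hcR', ENNReal.toReal_ofReal hcRpos.le, smul_eq_mul]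
    have hsub' := hsub σ k hk
    rw [hcomp, hint] at hsub'
    have hτle : C τ ≤ α * C π := hupper α hα0 hα1
    have hcRα : cR * α = 1 - lam := by
      rw [hα, mul_div_cancel₀ _ hcRpos.ne']
    have h5 : cR * C τ ≤ cR * (α * C π) := mul_le_mul_of_nonneg_left hτle hcRpos.le
    have h6 : cR * (α * C π) = (1 - lam) * C π := by rw [← mul_assoc, hcRα]
    have hlow : lam * C π ≤ C σ := by nlinarith
    exact le_antisymm (hupper lam h0 h1) hlow

end IC
end

section
/- Let P and P' be n×k real matrices with nonnegative entries such that every column of P and of P' sums to 1, and suppose no two distinct rows of P are proportional (for i ≠ j there is no c ∈ ℝ with row i of P equal to c times row j of P or row j equal to c times row i). Suppose there exist n×n real matrices M and M' with nonnegative entries whose columns each sum to 1 such that P' = M'·P and P = M·P'. Then M and M' are permutation matrices. -/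
namespace IC12

/-- A matrix is column-stochastic: nonnegative entries, each column sums to 1. -/
def ColStoch {m k : ℕ} (A : Matrix (Fin m) (Fin k) ℝ) : Prop :=
  (∀ i j, 0 ≤ A i j) ∧ ∀ j, ∑ i, A i j = 1

/-- A permutation matrix: a 0–1 matrix with exactly one 1 in each row and column. -/
def IsPermMatrix {n : ℕ} (M : Matrix (Fin n) (Fin n) ℝ) : Prop :=
  ∃ σ : Equiv.Perm (Fin n), ∀ i j, M i j = if i = σ j then 1 else 0

/-- Key lemma: a column-stochastic matrix fixing an experiment with pairwise
non-proportional rows is the identity. -/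
lemma eq_one_of_fix {n k : ℕ} (P : Matrix (Fin n) (Fin k) ℝ)
    (hnorep : ∀ i j : Fin n, i ≠ j → ∀ c : ℝ, P i ≠ c • P j)
    (A : Matrix (Fin n) (Fin n) ℝ) (hA : ColStoch A) (hAP : A * P = P) :
    A = 1 := by
  by_cases hsub : ∀ a b : Fin n, a = b
  · ext i j
    have hij : i = j := hsub i j
    subst hij
    have hc := hA.2 i
    rw [Finset.sum_eq_single i (fun b _ hb => absurd (hsub b i) hb)
      (fun h => absurd (Finset.mem_univ i) h)] at hc
    simp [hc, Matrix.one_apply]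
  · push_neg at hsub
    obtain ⟨a, b, hab⟩ := hsub
    -- all rows are nonzero
    have hrow : ∀ i, P i ≠ 0 := by
      intro i h0
      rcases eq_or_ne i a with rfl | h
      · exact hnorep i b hab 0 (by rw [h0, zero_smul])
      · exact hnorep i a h 0 (by rw [h0, zero_smul])
    -- move to Euclidean space
    set e : (Fin k → ℝ) ≃ₗ[ℝ] EuclideanSpace ℝ (Fin k) :=
      (WithLp.linearEquiv 2 ℝ (Fin k → ℝ)).symm with he
    set v : Fin n → EuclideanSpace ℝ (Fin k) := fun i => e (P i) with hvdef
    have hPsum : ∀ i, P i = ∑ j, A i j • P j := by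
      intro i
      funext c
      have h := congrFun (congrFun hAP i) c
      rw [Matrix.mul_apply] at h
      rw [← h]
      simp [Finset.sum_apply]
    have hv : ∀ i, v i = ∑ j, A i j • v j := by
      intro i
      simp only [hvdef]
      rw [hPsum i, map_sum]
      simp
    have hvne : ∀ i, v i ≠ 0 := by
      intro i h
      exact hrow i (e.map_eq_zero_iff.mp h)
    have hle : ∀ i, ‖v i‖ ≤ ∑ j, A i j * ‖v j‖ := by
      intro i
      rw [hv i]
      refine (norm_sum_le _ _).trans_eq ?_
      refine Finset.sum_congr rfl fun j _ => ?_
      rw [norm_smul, Real.norm_eq_abs, abs_of_nonneg (hA.1 i j)]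
    have hsum : ∑ i, ‖v i‖ = ∑ i, ∑ j, A i j * ‖v j‖ := by
      rw [Finset.sum_comm]
      refine (Finset.sum_congr rfl fun j _ => ?_).symm
      rw [← Finset.sum_mul, hA.2 j, one_mul]
    have heq : ∀ i, ‖v i‖ = ∑ j, A i j * ‖v j‖ := by
      intro i
      exact (Finset.sum_eq_sum_iff_of_le (fun i _ => hle i)).mp hsum i (Finset.mem_univ i)
    -- no row of A has two nonzero entries
    have pairKey : ∀ i (j1 j2 : Fin n), j1 ≠ j2 → A i j1 ≠ 0 → A i j2 ≠ 0 → False := by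
      intro i j1 j2 hne h1 h2
      set w : Fin n → EuclideanSpace ℝ (Fin k) := fun j => A i j • v j with hw
      have hwsum : ‖∑ j, w j‖ = ∑ j, ‖w j‖ := by
        rw [← hv i, heq i]
        refine Finset.sum_congr rfl fun j _ => ?_
        rw [hw, norm_smul, Real.norm_eq_abs, abs_of_nonneg (hA.1 i j)]
      have hmem2 : j2 ∈ Finset.univ.erase j1 := Finset.mem_erase.mpr ⟨hne.symm, Finset.mem_univ j2⟩
      have hs1 : ∑ j, w j = w j1 + (w j2 + ∑ j ∈ (Finset.univ.erase j1).erase j2, w j) := by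
        rw [Finset.add_sum_erase _ _ hmem2, Finset.add_sum_erase _ _ (Finset.mem_univ j1)]
      have hs2 : ∑ j, ‖w j‖ = ‖w j1‖ + (‖w j2‖ + ∑ j ∈ (Finset.univ.erase j1).erase j2, ‖w j‖) := by
        rw [Finset.add_sum_erase _ (fun j => ‖w j‖) hmem2,
          Finset.add_sum_erase _ (fun j => ‖w j‖) (Finset.mem_univ j1)]
      have key2 : ‖w j1 + w j2‖ = ‖w j1‖ + ‖w j2‖ := by
        have t1 : ‖w j1 + w j2 + ∑ j ∈ (Finset.univ.erase j1).erase j2, w j‖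
            ≤ ‖w j1 + w j2‖ + ‖∑ j ∈ (Finset.univ.erase j1).erase j2, w j‖ := norm_add_le _ _
        have t2 : ‖∑ j ∈ (Finset.univ.erase j1).erase j2, w j‖
            ≤ ∑ j ∈ (Finset.univ.erase j1).erase j2, ‖w j‖ := norm_sum_le _ _
        have t3 : ‖w j1 + w j2‖ ≤ ‖w j1‖ + ‖w j2‖ := norm_add_le _ _
        have t0 : ‖w j1 + w j2 + ∑ j ∈ (Finset.univ.erase j1).erase j2, w j‖
            = ‖w j1‖ + (‖w j2‖ + ∑ j ∈ (Finset.univ.erase j1).erase j2, ‖w j‖) := by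
          rw [add_assoc, ← hs1, hwsum, hs2]
        linarith
      have hray : SameRay ℝ (w j1) (w j2) := sameRay_iff_norm_add.mpr key2
      have hw1 : w j1 ≠ 0 := smul_ne_zero h1 (hvne j1)
      have hw2 : w j2 ≠ 0 := smul_ne_zero h2 (hvne j2)
      obtain ⟨r, s, hr, hs, hrs⟩ := hray.exists_pos hw1 hw2
      -- (r * A i j1) • v j1 = (s * A i j2) • v j2
      rw [hw, smul_smul, smul_smul] at hrs
      have hra : r * A i j1 ≠ 0 := by
        have := lt_of_le_of_ne (hA.1 i j1) (Ne.symm h1)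
        positivity
      have hc : v j1 = ((r * A i j1)⁻¹ * (s * A i j2)) • v j2 := by
        rw [mul_smul, ← hrs, inv_smul_smul₀ hra]
      exact hnorep j1 j2 hne ((r * A i j1)⁻¹ * (s * A i j2)) (by
        apply e.injective
        simpa [hvdef, map_smul] using hc)
    have hoff : ∀ i j, j ≠ i → A i j = 0 := by
      intro i j hji
      by_contra hAij
      have h0 : ∀ j', j' ≠ j → A i j' = 0 := fun j' hj' =>
        by_contra fun h => pairKey i j' j hj' h hAij
      have hvi : v i = A i j • v j := by
        rw [hv i, Finset.sum_eq_single j (fun b _ hb => by rw [h0 b hb, zero_smul])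
          (fun h => absurd (Finset.mem_univ j) h)]
      exact hnorep i j hji.symm (A i j) (by
        apply e.injective
        simpa [hvdef, map_smul] using hvi)
    ext i j
    rcases eq_or_ne i j with rfl | hij
    · have hc := hA.2 i
      rw [Finset.sum_eq_single i (fun b _ hb => hoff b i (Ne.symm hb))
        (fun h => absurd (Finset.mem_univ i) h)] at hc
      simp [hc, Matrix.one_apply]
    · rw [hoff i j hij.symm, Matrix.one_apply_ne hij]

/-- If two column-stochastic matrices multiply to the identity, both are
permutation matrices. -/
lemma perm_of_mul_eq_one {n : ℕ} (M M' : Matrix (Fin n) (Fin n) ℝ)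
    (hM : ColStoch M) (hM' : ColStoch M') (h : M * M' = 1) :
    IsPermMatrix M ∧ IsPermMatrix M' := by
  have h' : M' * M = 1 := mul_eq_one_comm.mp h
  -- every row of M' has a nonzero entry
  have hrowM' : ∀ l, ∃ j, M' l j ≠ 0 := by
    intro l
    by_contra h0
    push_neg at h0
    have hd : (M' * M) l l = 1 := by rw [h', Matrix.one_apply_eq]
    rw [Matrix.mul_apply, Finset.sum_eq_zero (fun t _ => by rw [h0 t, zero_mul])] at hd
    exact zero_ne_one hd
  -- each column of M has at most one nonzero entry
  have huniq : ∀ l i i', M i l ≠ 0 → M i' l ≠ 0 → i = i' := by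
    intro l i i' hi hi'
    obtain ⟨j, hj⟩ := hrowM' l
    have key : ∀ i0, M i0 l ≠ 0 → i0 = j := by
      intro i0 h0
      have hterm : 0 < M i0 l * M' l j :=
        mul_pos (lt_of_le_of_ne (hM.1 _ _) (Ne.symm h0))
          (lt_of_le_of_ne (hM'.1 _ _) (Ne.symm hj))
      have hpos : 0 < ∑ t, M i0 t * M' t j :=
        lt_of_lt_of_le hterm (Finset.single_le_sum
          (f := fun t => M i0 t * M' t j)
          (fun t _ => mul_nonneg (hM.1 _ _) (hM'.1 _ _)) (Finset.mem_univ l))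
      have hne : (M * M') i0 j ≠ 0 := by
        rw [Matrix.mul_apply]; exact ne_of_gt hpos
      rw [h] at hne
      by_contra hne'
      exact hne (Matrix.one_apply_ne hne')
    rw [key i hi, key i' hi']
  have hex : ∀ l, ∃ i, M i l ≠ 0 := by
    intro l
    by_contra h0
    push_neg at h0
    have hc := hM.2 l
    rw [Finset.sum_eq_zero (fun t _ => h0 t)] at hc
    exact zero_ne_one hc
  choose σ0 hσ0 using hex
  have hcol : ∀ l t, M t l = if t = σ0 l then 1 else 0 := by
    intro l t
    by_cases ht : t = σ0 l
    · rw [if_pos ht]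
      have hc := hM.2 l
      rw [Finset.sum_eq_single (σ0 l) (fun b _ hb => by
          by_contra hb'; exact hb (huniq l b (σ0 l) hb' (hσ0 l)))
        (fun h => absurd (Finset.mem_univ _) h)] at hc
      rw [ht]; exact hc
    · rw [if_neg ht]
      by_contra hb'
      exact ht (huniq l t (σ0 l) hb' (hσ0 l))
  have hMM : ∀ l m, (M' * M) l m = M' l (σ0 m) := by
    intro l m
    rw [Matrix.mul_apply]
    simp [hcol m, mul_ite, Finset.sum_ite_eq']
  have hinj : Function.Injective σ0 := by
    intro l1 l2 hl
    by_contra hne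
    have e1 : M' l1 (σ0 l1) = 1 := by rw [← hMM, h', Matrix.one_apply_eq]
    have e2 : M' l1 (σ0 l2) = 0 := by rw [← hMM, h', Matrix.one_apply_ne hne]
    rw [hl] at e1
    rw [e1] at e2
    exact one_ne_zero e2
  let σ : Equiv.Perm (Fin n) := Equiv.ofBijective σ0 (Finite.injective_iff_bijective.mp hinj)
  have hσ : ∀ l, σ l = σ0 l := fun l => rfl
  refine ⟨⟨σ, fun i j => by rw [hcol j i, hσ]⟩, ⟨σ.symm, fun i j => ?_⟩⟩
  have hj : σ0 (σ.symm j) = j := by rw [← hσ, Equiv.apply_symm_apply]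
  have : M' i j = (M' * M) i (σ.symm j) := by rw [hMM, hj]
  rw [this, h', Matrix.one_apply]

/-- Lemma `lem:BWequiv`, Blackwell equivalence: if two experiments
(with no two rows of P proportional) are mutual garblings of each other, the garbling
matrices are permutation matrices. -/
theorem blackwell_equivalence {n k : ℕ} (P P' : Matrix (Fin n) (Fin k) ℝ)
    (hP : ColStoch P) (hP' : ColStoch P')
    (hnorep : ∀ i j : Fin n, i ≠ j → ∀ c : ℝ, P i ≠ c • P j)
    (M M' : Matrix (Fin n) (Fin n) ℝ) (hM : ColStoch M) (hM' : ColStoch M')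
    (h1 : P' = M' * P) (h2 : P = M * P') :
    IsPermMatrix M ∧ IsPermMatrix M' := by
  have hA : ColStoch (M * M') := by
    constructor
    · intro i j
      rw [Matrix.mul_apply]
      exact Finset.sum_nonneg fun t _ => mul_nonneg (hM.1 _ _) (hM'.1 _ _)
    · intro j
      simp only [Matrix.mul_apply]
      rw [Finset.sum_comm]
      calc ∑ t, ∑ i, M i t * M' t j = ∑ t, (∑ i, M i t) * M' t j := by
            refine Finset.sum_congr rfl fun t _ => ?_
            rw [Finset.sum_mul]
        _ = ∑ t, M' t j := by
            refine Finset.sum_congr rfl fun t _ => ?_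
            rw [hM.2 t, one_mul]
        _ = 1 := hM'.2 j
  have hAP : (M * M') * P = P := by
    rw [Matrix.mul_assoc, ← h1, ← h2]
  exact perm_of_mul_eq_one M M' hM hM' (eq_one_of_fix P hnorep (M * M') hA hAP)

end IC12
end

section
/- Let K ≥ 3 be an integer and let Q be a symmetric K×K real matrix with Q·𝟙 = 0 (every row of Q sums to 0). Let U = {μ ∈ ℝ^{K−1} : μᵢ > 0 for all i and ∑_{i=1}^{K−1} μᵢ < 1}, and for μ ∈ U write μ_K = 1 − ∑_{i=1}^{K−1} μᵢ. Suppose there exists a function H : U → ℝ of class C³ such that for all μ ∈ U and all 1 ≤ i, j ≤ K−1, the second partial derivative ∂²H/∂μᵢ∂μⱼ(μ) equals Q_{ij}/(μᵢμⱼ) − Q_{iK}/(μᵢμ_K) − Q_{jK}/(μⱼμ_K) + Q_{KK}/μ_K². Then Q = 0. (Consequently, for three or more states, no nonzero prior-independent local cost kernel B(μ) = diag(μ)⁻¹·Q·diag(μ)⁻¹ is a Hessian, so no prior-independent direct cost can generate a posterior separable indirect cost.) -/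
namespace IC14

set_option maxHeartbeats 1000000
set_option synthInstance.maxHeartbeats 200000

open Filter Topology

section Aux

variable {n : ℕ}

private lemma isOpen_U (n : ℕ) :
    IsOpen {μ : Fin n → ℝ | (∀ i, 0 < μ i) ∧ ∑ i, μ i < 1} := by
  have h1 : IsOpen {μ : Fin n → ℝ | ∀ i, 0 < μ i} := by
    have : {μ : Fin n → ℝ | ∀ i, 0 < μ i} = ⋂ i, {μ : Fin n → ℝ | 0 < μ i} := by
      ext μ; simp
    rw [this]
    exact isOpen_iInter_of_finite fun i =>
      isOpen_lt continuous_const (continuous_apply i)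
  have h2 : IsOpen {μ : Fin n → ℝ | ∑ i, μ i < 1} :=
    isOpen_lt (by continuity) continuous_const
  have : {μ : Fin n → ℝ | (∀ i, 0 < μ i) ∧ ∑ i, μ i < 1}
      = {μ : Fin n → ℝ | ∀ i, 0 < μ i} ∩ {μ : Fin n → ℝ | ∑ i, μ i < 1} := rfl
  rw [this]; exact h1.inter h2

private lemma line_deriv (f R : (Fin n → ℝ) → ℝ) {μ v : Fin n → ℝ}
    (hf : DifferentiableAt ℝ f μ) (hfR : f =ᶠ[𝓝 μ] R) :
    fderiv ℝ f μ v = deriv (fun t : ℝ => R (μ + t • v)) 0 := by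
  have hline : HasDerivAt (fun t : ℝ => μ + t • v) v 0 := by
    simpa using ((hasDerivAt_id (0:ℝ)).smul_const v).const_add μ
  have h0 : (fun t : ℝ => μ + t • v) 0 = μ := by simp
  have hf' : HasFDerivAt f (fderiv ℝ f μ) ((fun t : ℝ => μ + t • v) 0) := by
    rw [h0]; exact hf.hasFDerivAt
  have h2 : HasDerivAt (fun t : ℝ => f (μ + t • v)) (fderiv ℝ f μ v) 0 :=
    hf'.comp_hasDerivAt 0 hline
  have htend : Filter.Tendsto (fun t : ℝ => μ + t • v) (𝓝 0) (𝓝 μ) := by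
    have h := hline.continuousAt.tendsto
    simpa using h
  calc fderiv ℝ f μ v = deriv (fun t : ℝ => f (μ + t • v)) 0 := h2.deriv.symm
    _ = deriv (fun t : ℝ => R (μ + t • v)) 0 :=
      Filter.EventuallyEq.deriv_eq (hfR.comp_tendsto htend)

private lemma third_cross (H : (Fin n → ℝ) → ℝ) {U : Set (Fin n → ℝ)}
    (hU : IsOpen U) (hH : ContDiffOn ℝ 3 H U) {μ : Fin n → ℝ} (hμ : μ ∈ U)
    (i j k : Fin n) (R1 R2 : (Fin n → ℝ) → ℝ)
    (h1 : ∀ ν ∈ U, fderiv ℝ (fun ρ => fderiv ℝ H ρ (Pi.single j 1)) ν (Pi.single i 1) = R1 ν)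
    (h2 : ∀ ν ∈ U, fderiv ℝ (fun ρ => fderiv ℝ H ρ (Pi.single j 1)) ν (Pi.single k 1) = R2 ν) :
    deriv (fun t : ℝ => R1 (μ + t • (Pi.single k 1 : Fin n → ℝ))) 0
      = deriv (fun t : ℝ => R2 (μ + t • (Pi.single i 1 : Fin n → ℝ))) 0 := by
  set g : (Fin n → ℝ) → ℝ := fun ρ => fderiv ℝ H ρ (Pi.single j 1) with hg
  have hnhds : U ∈ 𝓝 μ := hU.mem_nhds hμ
  have hH3 : ContDiffAt ℝ 3 H μ := hH.contDiffAt hnhds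
  have hgC : ContDiffAt ℝ 2 g μ :=
    (hH3.fderiv_right (by norm_num)).clm_apply contDiffAt_const
  have hdg : DifferentiableAt ℝ (fderiv ℝ g) μ :=
    (hgC.fderiv_right (m := 1) (by norm_num)).differentiableAt (by norm_num)
  have hdiff : ∀ v : Fin n → ℝ, DifferentiableAt ℝ (fun ν => fderiv ℝ g ν v) μ :=
    fun v => hdg.clm_apply (differentiableAt_const v)
  have keyfd : ∀ v w : Fin n → ℝ,
      fderiv ℝ (fun ν => fderiv ℝ g ν v) μ w = fderiv ℝ (fderiv ℝ g) μ w v := by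
    intro v w
    have h := (hdg.hasFDerivAt.clm_apply (hasFDerivAt_const v μ)).fderiv
    rw [h]; simp
  have hev1 : (fun ν => fderiv ℝ g ν (Pi.single i 1)) =ᶠ[𝓝 μ] R1 := by
    filter_upwards [hnhds] with ν hν using h1 ν hν
  have hev2 : (fun ν => fderiv ℝ g ν (Pi.single k 1)) =ᶠ[𝓝 μ] R2 := by
    filter_upwards [hnhds] with ν hν using h2 ν hν
  have hsym : IsSymmSndFDerivAt ℝ g μ := hgC.isSymmSndFDerivAt (by norm_num)
  calc deriv (fun t : ℝ => R1 (μ + t • (Pi.single k 1 : Fin n → ℝ))) 0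
      = fderiv ℝ (fun ν => fderiv ℝ g ν (Pi.single i 1)) μ (Pi.single k 1) :=
        (line_deriv _ _ (hdiff _) hev1).symm
    _ = fderiv ℝ (fderiv ℝ g) μ (Pi.single k 1) (Pi.single i 1) := keyfd _ _
    _ = fderiv ℝ (fderiv ℝ g) μ (Pi.single i 1) (Pi.single k 1) := hsym _ _
    _ = fderiv ℝ (fun ν => fderiv ℝ g ν (Pi.single k 1)) μ (Pi.single i 1) :=
        (keyfd _ _).symm
    _ = deriv (fun t : ℝ => R2 (μ + t • (Pi.single i 1 : Fin n → ℝ))) 0 :=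
        line_deriv _ _ (hdiff _) hev2

private lemma deriv1 (A B C Dd x y s : ℝ) (hx : x ≠ 0) (hy : y ≠ 0) (hs : s ≠ 0) :
    HasDerivAt (fun t : ℝ => A/(x*(y+t)) - B/(x*(s-t)) - C/((y+t)*(s-t)) + Dd/(s-t)^2)
      (-A/(x*y^2) + C/(y^2*s) - B/(x*s^2) - C/(y*s^2) + 2*Dd/s^3) 0 := by
  have h1 : HasDerivAt (fun t : ℝ => y + t) 1 0 := by
    simpa using (hasDerivAt_id (0:ℝ)).const_add y
  have h2 : HasDerivAt (fun t : ℝ => s - t) (-1) 0 := by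
    simpa using (hasDerivAt_id (0:ℝ)).const_sub s
  have hd1 : HasDerivAt (fun t : ℝ => x*(y+t)) (x*1) 0 := h1.const_mul x
  have hd2 : HasDerivAt (fun t : ℝ => x*(s-t)) (x*(-1)) 0 := h2.const_mul x
  have hd3 : HasDerivAt (fun t : ℝ => (y+t)*(s-t)) (1*(s-0) + (y+0)*(-1)) 0 :=
    h1.mul h2
  have hd4 : HasDerivAt (fun t : ℝ => (s-t)^2) (2*(s-0)^1*(-1)) 0 := h2.pow 2
  have hne1 : (fun t : ℝ => x*(y+t)) 0 ≠ 0 := by simpa using mul_ne_zero hx hy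
  have hne2 : (fun t : ℝ => x*(s-t)) 0 ≠ 0 := by simpa using mul_ne_zero hx hs
  have hne3 : (fun t : ℝ => (y+t)*(s-t)) 0 ≠ 0 := by simpa using mul_ne_zero hy hs
  have hne4 : (fun t : ℝ => (s-t)^2) 0 ≠ 0 := by simpa using pow_ne_zero 2 hs
  have ha := (hasDerivAt_const (0:ℝ) A).div hd1 hne1
  have hb := (hasDerivAt_const (0:ℝ) B).div hd2 hne2
  have hc := (hasDerivAt_const (0:ℝ) C).div hd3 hne3
  have hd := (hasDerivAt_const (0:ℝ) Dd).div hd4 hne4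
  have := ((ha.sub hb).sub hc).add hd
  refine this.congr_deriv ?_
  simp only [add_zero, sub_zero, pow_one]
  field_simp
  ring

private lemma deriv2 (A2 C Dd y s : ℝ) (hy : y ≠ 0) (hs : s ≠ 0) :
    HasDerivAt (fun t : ℝ => A2/(y*y) - C/(y*(s-t)) - C/(y*(s-t)) + Dd/(s-t)^2)
      (-C/(y*s^2) - C/(y*s^2) + 2*Dd/s^3) 0 := by
  have h2 : HasDerivAt (fun t : ℝ => s - t) (-1) 0 := by
    simpa using (hasDerivAt_id (0:ℝ)).const_sub s
  have hd2 : HasDerivAt (fun t : ℝ => y*(s-t)) (y*(-1)) 0 := h2.const_mul y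
  have hd4 : HasDerivAt (fun t : ℝ => (s-t)^2) (2*(s-0)^1*(-1)) 0 := h2.pow 2
  have hne2 : (fun t : ℝ => y*(s-t)) 0 ≠ 0 := by simpa using mul_ne_zero hy hs
  have hne4 : (fun t : ℝ => (s-t)^2) 0 ≠ 0 := by simpa using pow_ne_zero 2 hs
  have hb := (hasDerivAt_const (0:ℝ) C).div hd2 hne2
  have hd := (hasDerivAt_const (0:ℝ) Dd).div hd4 hne4
  have ha : HasDerivAt (fun _ : ℝ => A2/(y*y)) 0 0 := hasDerivAt_const _ _
  have := ((ha.sub hb).sub hb).add hd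
  refine this.congr_deriv ?_
  field_simp
  ring

private lemma residue (A B C Dd x y s : ℝ) (hx : x ≠ 0) (hy : y ≠ 0) (hs : s ≠ 0)
    (hE : -A/(x*y^2) + C/(y^2*s) - B/(x*s^2) - C/(y*s^2) + 2*Dd/s^3
        = -C/(y*s^2) - C/(y*s^2) + 2*Dd/s^3) :
    -A*s^2 + C*x*(s+y) - B*y^2 = 0 := by
  have h : -A*s^2 + C*x*(s+y) - B*y^2 =
      ((-A/(x*y^2) + C/(y^2*s) - B/(x*s^2) - C/(y*s^2) + 2*Dd/s^3)
        - (-C/(y*s^2) - C/(y*s^2) + 2*Dd/s^3)) * (x*y^2*s^2) := by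
    field_simp
    ring
  rw [hE, sub_self, zero_mul] at h
  exact h


private lemma pair_zero {n : ℕ} (H : (Fin n → ℝ) → ℝ)
    (hH : ContDiffOn ℝ 3 H {μ : Fin n → ℝ | (∀ i, 0 < μ i) ∧ ∑ i, μ i < 1})
    (i k : Fin n) (hik : i ≠ k) (A B C Dd A2 : ℝ)
    (h1 : ∀ ν ∈ {μ : Fin n → ℝ | (∀ i, 0 < μ i) ∧ ∑ i, μ i < 1},
      fderiv ℝ (fun ρ => fderiv ℝ H ρ (Pi.single k 1)) ν (Pi.single i 1)
        = A / (ν i * ν k) - B / (ν i * (1 - ∑ l, ν l))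
          - C / (ν k * (1 - ∑ l, ν l)) + Dd / (1 - ∑ l, ν l)^2)
    (h2 : ∀ ν ∈ {μ : Fin n → ℝ | (∀ i, 0 < μ i) ∧ ∑ i, μ i < 1},
      fderiv ℝ (fun ρ => fderiv ℝ H ρ (Pi.single k 1)) ν (Pi.single k 1)
        = A2 / (ν k * ν k) - C / (ν k * (1 - ∑ l, ν l))
          - C / (ν k * (1 - ∑ l, ν l)) + Dd / (1 - ∑ l, ν l)^2)
    (ε Dv : ℝ) (hε0 : 0 < ε) (hD0 : 0 < Dv) (hεD : ε ≤ Dv / 4)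
    (hDsum : Dv = 1 - ((n : ℝ) - 2) * ε) :
    A = 0 ∧ B = 0 ∧ C = 0 := by
  set U : Set (Fin n → ℝ) := {μ : Fin n → ℝ | (∀ i, 0 < μ i) ∧ ∑ i, μ i < 1} with hUdef
  have hUopen : IsOpen U := isOpen_U n
  have key : ∀ p q : ℝ, ε ≤ p → ε ≤ q → p + q < Dv →
      -A*(Dv-p-q)^2 + C*p*((Dv-p-q)+q) - B*q^2 = 0 := by
    intro p q hp hq hpq
    set μ : Fin n → ℝ :=
      fun l => ε + (if l = i then p - ε else 0) + (if l = k then q - ε else 0) with hμ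
    have hμi : μ i = p := by
      rw [hμ]; simp [hik]
    have hμk : μ k = q := by
      rw [hμ]; simp [Ne.symm hik]
    have hμpos : ∀ l, 0 < μ l := by
      intro l
      rw [hμ]
      have g1 : (0:ℝ) ≤ if l = i then p - ε else 0 := by
        split <;> linarith
      have g2 : (0:ℝ) ≤ if l = k then q - ε else 0 := by
        split <;> linarith
      dsimp only
      linarith
    have hsum : ∑ l, μ l = p + q + ((n:ℝ) - 2)*ε := by
      rw [hμ]
      rw [Finset.sum_add_distrib, Finset.sum_add_distrib]
      rw [Finset.sum_const, Finset.sum_ite_eq' Finset.univ i (fun _ => p - ε),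
        Finset.sum_ite_eq' Finset.univ k (fun _ => q - ε)]
      simp only [Finset.mem_univ, if_true, Finset.card_univ, nsmul_eq_mul, Fintype.card_fin]
      ring
    have hμU : μ ∈ U := by
      constructor
      · exact hμpos
      · rw [hsum]
        rw [hDsum] at hpq
        linarith
    set s : ℝ := Dv - p - q with hs
    have hs0 : 0 < s := by rw [hs]; linarith
    have hp0 : 0 < p := lt_of_lt_of_le hε0 hp
    have hq0 : 0 < q := lt_of_lt_of_le hε0 hq
    have hsval : 1 - ∑ l, μ l = s := by
      rw [hsum, hs, hDsum]; ring
    set R1 : (Fin n → ℝ) → ℝ := fun ν =>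
      A / (ν i * ν k) - B / (ν i * (1 - ∑ l, ν l))
        - C / (ν k * (1 - ∑ l, ν l)) + Dd / (1 - ∑ l, ν l)^2 with hR1
    set R2 : (Fin n → ℝ) → ℝ := fun ν =>
      A2 / (ν k * ν k) - C / (ν k * (1 - ∑ l, ν l))
        - C / (ν k * (1 - ∑ l, ν l)) + Dd / (1 - ∑ l, ν l)^2 with hR2
    have hcross := third_cross H hUopen hH hμU i k k R1 R2
      (fun ν hν => h1 ν hν) (fun ν hν => h2 ν hν)
    have hcoord : ∀ (m : Fin n) (t : ℝ) (v : Fin n),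
        (μ + t • (Pi.single v 1 : Fin n → ℝ)) m = μ m + (if m = v then t else 0) := by
      intro m t v
      by_cases h : m = v <;> simp [h, Pi.single_apply]
    have hsumline : ∀ (t : ℝ) (v : Fin n),
        ∑ l, (μ + t • (Pi.single v 1 : Fin n → ℝ)) l = (∑ l, μ l) + t := by
      intro t v
      rw [Finset.sum_congr rfl (fun l _ => hcoord l t v), Finset.sum_add_distrib,
        Finset.sum_ite_eq' Finset.univ v (fun _ => t)]
      simp
    have lineEq1 : (fun t : ℝ => R1 (μ + t • (Pi.single k 1 : Fin n → ℝ))) =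
        fun t : ℝ => A/(p*(q+t)) - B/(p*(s-t)) - C/((q+t)*(s-t)) + Dd/(s-t)^2 := by
      funext t
      rw [hR1]
      simp only []
      rw [hcoord i t k, hcoord k t k, hsumline t k]
      rw [if_neg hik, if_pos rfl, hμi, hμk]
      have hc1 : 1 - ((∑ l, μ l) + t) = s - t := by rw [← hsval]; ring
      rw [hc1]
      ring_nf
    have lineEq2 : (fun t : ℝ => R2 (μ + t • (Pi.single i 1 : Fin n → ℝ))) =
        fun t : ℝ => A2/(q*q) - C/(q*(s-t)) - C/(q*(s-t)) + Dd/(s-t)^2 := by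
      funext t
      rw [hR2]
      simp only []
      rw [hcoord k t i, hsumline t i]
      rw [if_neg (Ne.symm hik), hμk]
      have hc1 : 1 - ((∑ l, μ l) + t) = s - t := by rw [← hsval]; ring
      rw [hc1]
      ring_nf
    rw [lineEq1, lineEq2] at hcross
    rw [(deriv1 A B C Dd p q s hp0.ne' hq0.ne' hs0.ne').deriv,
      (deriv2 A2 C Dd q s hq0.ne' hs0.ne').deriv] at hcross
    have hres := residue A B C Dd p q s hp0.ne' hq0.ne' hs0.ne' hcross
    rw [hs] at hres
    exact hres
  have hD4 : ε ≤ Dv/4 := hεD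
  have hD2 : ε ≤ Dv/2 := by linarith
  have r1 := key (Dv/2) (Dv/4) hD2 hD4 (by linarith)
  have r2 := key (Dv/4) (Dv/2) hD4 hD2 (by linarith)
  have r3 := key (Dv/4) (Dv/4) hD4 hD4 (by linarith)
  have e1 : (-A + 4*C - B) * Dv^2 = 0 := by linear_combination 16 * r1
  have e2 : (-A + 3*C - 4*B) * Dv^2 = 0 := by linear_combination 16 * r2
  have e3 : (-4*A + 3*C - B) * Dv^2 = 0 := by linear_combination 16 * r3
  have hD2ne : Dv^2 ≠ 0 := pow_ne_zero 2 hD0.ne'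
  have f1 : -A + 4*C - B = 0 := by
    rcases mul_eq_zero.mp e1 with h | h
    · exact h
    · exact absurd h hD2ne
  have f2 : -A + 3*C - 4*B = 0 := by
    rcases mul_eq_zero.mp e2 with h | h
    · exact h
    · exact absurd h hD2ne
  have f3 : -4*A + 3*C - B = 0 := by
    rcases mul_eq_zero.mp e3 with h | h
    · exact h
    · exact absurd h hD2ne
  refine ⟨?_, ?_, ?_⟩ <;> linarith

end Aux

/-- for K ≥ 3 states, no nonzero symmetric Q with zero row sums yields a
prior-independent local kernel B(μ) = diag(μ)⁻¹ Q diag(μ)⁻¹ that is a Hessian: if some C³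
function H on the open coordinate simplex U ⊆ ℝ^{K−1} has the prescribed second partial
derivatives, then Q = 0. -/
theorem no_prior_independent_hessian (K : ℕ) (hK : 3 ≤ K)
    (Q : Matrix (Fin K) (Fin K) ℝ) (hsymm : Q.IsSymm)
    (hrow : ∀ i, ∑ j, Q i j = 0)
    (H : (Fin (K - 1) → ℝ) → ℝ)
    (hH : ContDiffOn ℝ 3 H {μ : Fin (K - 1) → ℝ | (∀ i, 0 < μ i) ∧ ∑ i, μ i < 1})
    (hHess : ∀ μ ∈ {μ : Fin (K - 1) → ℝ | (∀ i, 0 < μ i) ∧ ∑ i, μ i < 1},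
      ∀ i j : Fin (K - 1),
        fderiv ℝ (fun ν => fderiv ℝ H ν (Pi.single j 1)) μ (Pi.single i 1) =
          Q (Fin.castLE (Nat.sub_le K 1) i) (Fin.castLE (Nat.sub_le K 1) j) / (μ i * μ j)
          - Q (Fin.castLE (Nat.sub_le K 1) i) ⟨K - 1, by omega⟩ / (μ i * (1 - ∑ l, μ l))
          - Q (Fin.castLE (Nat.sub_le K 1) j) ⟨K - 1, by omega⟩ / (μ j * (1 - ∑ l, μ l))
          + Q ⟨K - 1, by omega⟩ ⟨K - 1, by omega⟩ / (1 - ∑ l, μ l) ^ 2) :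
    Q = 0 := by
  have lst_def : (⟨K - 1, by omega⟩ : Fin K) = ⟨K - 1, by omega⟩ := rfl
  have hKr3 : (3:ℝ) ≤ (K:ℝ) := by exact_mod_cast hK
  have hKr0 : (0:ℝ) < (K:ℝ) := by linarith
  have hε0 : (0:ℝ) < 1/(2*(K:ℝ)) := by positivity
  have hcast : ((K - 1 : ℕ) : ℝ) = (K:ℝ) - 1 := by
    rw [Nat.cast_sub (by omega)]; norm_num
  have hDsum : ((K:ℝ) + 3)/(2*(K:ℝ)) = 1 - (((K - 1 : ℕ) : ℝ) - 2) * (1/(2*(K:ℝ))) := by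
    rw [hcast]; field_simp; ring
  have hD0 : (0:ℝ) < ((K:ℝ) + 3)/(2*(K:ℝ)) := by positivity
  have hεD : 1/(2*(K:ℝ)) ≤ (((K:ℝ) + 3)/(2*(K:ℝ)))/4 := by
    have hdiff : (((K:ℝ) + 3)/(2*(K:ℝ)))/4 - 1/(2*(K:ℝ)) = ((K:ℝ) - 1)/(8*(K:ℝ)) := by
      field_simp; ring
    have hnn : (0:ℝ) ≤ ((K:ℝ) - 1)/(8*(K:ℝ)) :=
      div_nonneg (by linarith) (by linarith)
    linarith [hdiff ▸ hnn]
  have pair : ∀ i k : Fin (K-1), i ≠ k →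
      Q (Fin.castLE (Nat.sub_le K 1) i) (Fin.castLE (Nat.sub_le K 1) k) = 0 ∧
      Q (Fin.castLE (Nat.sub_le K 1) i) ⟨K - 1, by omega⟩ = 0 ∧
      Q (Fin.castLE (Nat.sub_le K 1) k) ⟨K - 1, by omega⟩ = 0 := by
    intro i k hik
    exact pair_zero H hH i k hik
      (Q (Fin.castLE (Nat.sub_le K 1) i) (Fin.castLE (Nat.sub_le K 1) k))
      (Q (Fin.castLE (Nat.sub_le K 1) i) ⟨K - 1, by omega⟩)
      (Q (Fin.castLE (Nat.sub_le K 1) k) ⟨K - 1, by omega⟩)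
      (Q ⟨K - 1, by omega⟩ ⟨K - 1, by omega⟩)
      (Q (Fin.castLE (Nat.sub_le K 1) k) (Fin.castLE (Nat.sub_le K 1) k))
      (fun ν hν => hHess ν hν i k) (fun ν hν => hHess ν hν k k)
      (1/(2*(K:ℝ))) (((K:ℝ) + 3)/(2*(K:ℝ))) hε0 hD0 hεD hDsum
  have from_i : ∀ i : Fin (K-1), Q (Fin.castLE (Nat.sub_le K 1) i) ⟨K - 1, by omega⟩ = 0 := by
    intro i
    by_cases h0 : (i:ℕ) = 0
    · have hik : i ≠ (⟨1, by omega⟩ : Fin (K-1)) := by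
        intro h; rw [h] at h0; simp at h0
      exact (pair i ⟨1, by omega⟩ hik).2.1
    · have hik : i ≠ (⟨0, by omega⟩ : Fin (K-1)) := by
        intro h; rw [h] at h0; simp at h0
      exact (pair i ⟨0, by omega⟩ hik).2.1
  have hval_lst : ∀ p : Fin K, ¬ ((p:ℕ) < K - 1) → p = ⟨K - 1, by omega⟩ := by
    intro p hp
    have hple : (p:ℕ) < K := p.isLt
    have hv : (p:ℕ) = K - 1 := by omega
    exact Fin.ext hv
  have offdiag : ∀ p q : Fin K, p ≠ q → Q p q = 0 := by
    intro p q hpq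
    by_cases hp : (p:ℕ) < K - 1
    · by_cases hq : (q:ℕ) < K - 1
      · have hik : (⟨(p:ℕ), hp⟩ : Fin (K-1)) ≠ ⟨(q:ℕ), hq⟩ := by
          intro h
          have hv : ((⟨(p:ℕ), hp⟩ : Fin (K-1)) : ℕ) = ((⟨(q:ℕ), hq⟩ : Fin (K-1)) : ℕ) :=
            congrArg Fin.val h
          exact hpq (Fin.ext hv)
        have h := (pair ⟨(p:ℕ), hp⟩ ⟨(q:ℕ), hq⟩ hik).1
        have hcp : Fin.castLE (Nat.sub_le K 1) (⟨(p:ℕ), hp⟩ : Fin (K-1)) = p := Fin.ext rfl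
        have hcq : Fin.castLE (Nat.sub_le K 1) (⟨(q:ℕ), hq⟩ : Fin (K-1)) = q := Fin.ext rfl
        rwa [hcp, hcq] at h
      · have hq' : q = ⟨K - 1, by omega⟩ := hval_lst q hq
        have h := from_i ⟨(p:ℕ), hp⟩
        have hcp : Fin.castLE (Nat.sub_le K 1) (⟨(p:ℕ), hp⟩ : Fin (K-1)) = p := Fin.ext rfl
        rw [hcp] at h
        rw [hq']
        exact h
    · have hp' : p = ⟨K - 1, by omega⟩ := hval_lst p hp
      have hq : (q:ℕ) < K - 1 := by
        by_contra hq
        exact hpq (by rw [hp', hval_lst q hq])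
      have h := from_i ⟨(q:ℕ), hq⟩
      have hcq : Fin.castLE (Nat.sub_le K 1) (⟨(q:ℕ), hq⟩ : Fin (K-1)) = q := Fin.ext rfl
      rw [hcq] at h
      have hsym' : Q p q = Q q p := by
        have hQ := hsymm
        rw [Matrix.IsSymm] at hQ
        calc Q p q = Q.transpose q p := rfl
          _ = Q q p := by rw [hQ]
      rw [hsym', hp']
      exact h
  have diag : ∀ p : Fin K, Q p p = 0 := by
    intro p
    have h := hrow p
    rwa [Finset.sum_eq_single p (fun b _ hb => offdiag p b (Ne.symm hb))
      (fun h => absurd (Finset.mem_univ p) h)] at h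
  ext p q
  by_cases h : p = q
  · rw [h]; simpa using diag q
  · simpa using offdiag p q h

end IC14
end

section
/- Let S be a nonempty finite set, let α ∈ ℝ, let μ ∈ (0,1), and let P⁰, P¹ : S → (0,1] satisfy ∑_s P⁰(s) = ∑_s P¹(s) = 1 (the conditional signal distributions of a binary-state experiment, with prior probability μ of state 1). Define the signal marginal P_S(s) = (1−μ)·P⁰(s) + μ·P¹(s), the posterior probability of state 1 after signal s, ν(s) = μ·P¹(s)/P_S(s) ∈ (0,1), and H : (0,1) → ℝ by H(q) = α·(2(q·log q + (1−q)·log(1−q)) − log q − log(1−q)). Then ∑_s P_S(s)·H(ν(s)) − H(μ) = 2α·( I + (1/2)·(D(P_S‖P⁰) + D(P_S‖P¹)) ), where I = ∑_s [ (1−μ)P⁰(s)·log(P⁰(s)/P_S(s)) + μP¹(s)·log(P¹(s)/P_S(s)) ] is the mutual information between state and signal, and D(P_S‖Pˣ) = ∑_s P_S(s)·log(P_S(s)/Pˣ(s)) is the Kullback–Leibler divergence from the conditional distribution Pˣ to the marginal P_S. -/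
namespace IC15

/-- The potential H(q) = α(2(q log q + (1−q)log(1−q)) − log q − log(1−q)). -/
noncomputable def Hpot (α q : ℝ) : ℝ :=
  α * (2 * (q * Real.log q + (1 - q) * Real.log (1 - q)) - Real.log q - Real.log (1 - q))

private lemma key (α μ a b : ℝ) (hμ0 : 0 < μ) (hμ1 : μ < 1) (ha : 0 < a) (hb : 0 < b) :
    ((1-μ)*a+μ*b) * Hpot α (μ*b/((1-μ)*a+μ*b)) - ((1-μ)*a+μ*b) * Hpot α μ
    = α*(2*((1-μ)*a*Real.log (a/((1-μ)*a+μ*b)) + μ*b*Real.log (b/((1-μ)*a+μ*b)))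
        + ((1-μ)*a+μ*b)*Real.log (((1-μ)*a+μ*b)/a)
        + ((1-μ)*a+μ*b)*Real.log (((1-μ)*a+μ*b)/b))
      + 2*α*Real.log μ*(μ*b - μ*((1-μ)*a+μ*b))
      + 2*α*Real.log (1-μ)*((1-μ)*a - (1-μ)*((1-μ)*a+μ*b)) := by
  have hμ1' : 0 < 1-μ := by linarith
  have hm : 0 < (1-μ)*a+μ*b := by positivity
  have h1ν : 1 - μ*b/((1-μ)*a+μ*b) = (1-μ)*a/((1-μ)*a+μ*b) := by
    field_simp
    ring
  rw [Hpot, Hpot, h1ν,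
    Real.log_div (by positivity) hm.ne', Real.log_div (by positivity) hm.ne',
    Real.log_mul hμ0.ne' hb.ne', Real.log_mul hμ1'.ne' ha.ne',
    Real.log_div ha.ne' hm.ne', Real.log_div hb.ne' hm.ne',
    Real.log_div hm.ne' ha.ne', Real.log_div hm.ne' hb.ne']
  field_simp
  ring

/-- in the binary-state case, the Bregman cost of the potential H equals
2α·(mutual information + ½·(average KL divergence from the signal marginal to the
conditional signal distributions)). -/
theorem binary_bregman_eq_mutualInfo_plus_KL {S : Type*} [Fintype S] [Nonempty S]
    (α μ : ℝ) (hμ0 : 0 < μ) (hμ1 : μ < 1)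
    (P0 P1 : S → ℝ)
    (hP0pos : ∀ s, 0 < P0 s) (hP0le : ∀ s, P0 s ≤ 1) (hP0sum : ∑ s, P0 s = 1)
    (hP1pos : ∀ s, 0 < P1 s) (hP1le : ∀ s, P1 s ≤ 1) (hP1sum : ∑ s, P1 s = 1) :
    (∑ s, ((1 - μ) * P0 s + μ * P1 s) *
        Hpot α (μ * P1 s / ((1 - μ) * P0 s + μ * P1 s))) - Hpot α μ
      = 2 * α *
        ((∑ s, ((1 - μ) * P0 s * Real.log (P0 s / ((1 - μ) * P0 s + μ * P1 s))
            + μ * P1 s * Real.log (P1 s / ((1 - μ) * P0 s + μ * P1 s))))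
          + (1 / 2) *
            ((∑ s, ((1 - μ) * P0 s + μ * P1 s) *
                Real.log (((1 - μ) * P0 s + μ * P1 s) / P0 s))
              + (∑ s, ((1 - μ) * P0 s + μ * P1 s) *
                  Real.log (((1 - μ) * P0 s + μ * P1 s) / P1 s)))) := by
  have hmsum : ∑ s, ((1 - μ) * P0 s + μ * P1 s) = 1 := by
    rw [Finset.sum_add_distrib, ← Finset.mul_sum, ← Finset.mul_sum, hP0sum, hP1sum]
    ring
  have hH : Hpot α μ = ∑ s, ((1 - μ) * P0 s + μ * P1 s) * Hpot α μ := by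
    rw [← Finset.sum_mul, hmsum, one_mul]
  rw [hH, ← Finset.sum_sub_distrib]
  have hstep : ∀ s : S,
      ((1 - μ) * P0 s + μ * P1 s) * Hpot α (μ * P1 s / ((1 - μ) * P0 s + μ * P1 s))
        - ((1 - μ) * P0 s + μ * P1 s) * Hpot α μ
      = α*(2*((1-μ)*P0 s*Real.log (P0 s/((1-μ)*P0 s+μ*P1 s))
            + μ*P1 s*Real.log (P1 s/((1-μ)*P0 s+μ*P1 s)))
          + ((1-μ)*P0 s+μ*P1 s)*Real.log (((1-μ)*P0 s+μ*P1 s)/P0 s)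
          + ((1-μ)*P0 s+μ*P1 s)*Real.log (((1-μ)*P0 s+μ*P1 s)/P1 s))
        + 2*α*Real.log μ*(μ*P1 s - μ*((1-μ)*P0 s+μ*P1 s))
        + 2*α*Real.log (1-μ)*((1-μ)*P0 s - (1-μ)*((1-μ)*P0 s+μ*P1 s)) :=
    fun s => key α μ (P0 s) (P1 s) hμ0 hμ1 (hP0pos s) (hP1pos s)
  rw [Finset.sum_congr rfl fun s _ => hstep s]
  simp only [Finset.sum_add_distrib, ← Finset.mul_sum, Finset.sum_sub_distrib,
    hP0sum, hP1sum]
  ring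
end IC15
end
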